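/- Given continuous maps π : Y → X and ϖ : Z → W, define the pullback f* : Closed(Y) → Closed(Z) by f*(A) = ϖ⁻¹(f(Cl_X(π(A)))). Then f* is admissible and the map π + ϖ : Y +_{f*} Z → X +_f W is continuous. -/
import Mathlib


open Set Topology

variable {X Y : Type*} [TopologicalSpace X] [TopologicalSpace Y]

/-- A map on subsets is *admissible* if it sends closed sets to closed sets,
the empty set to the empty set, and is finitely additive on closed sets. -/
def Admissible (f : Set X → Set Y) : Prop :=
  (∀ A : Set X, IsClosed A → IsClosed (f A)) ∧ f ∅ = ∅ ∧
    ∀ A B : Set X, IsClosed A → IsClosed B → f (A ∪ B) = f A ∪ f B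

/-- The defining condition for a subset of `X ⊕ Y` to be closed in the sum space `X +_f Y`. -/
def SumClosed (f : Set X → Set Y) (A : Set (X ⊕ Y)) : Prop :=
  IsClosed (Sum.inl ⁻¹' A) ∧ IsClosed (Sum.inr ⁻¹' A) ∧
    f (Sum.inl ⁻¹' A) ⊆ Sum.inr ⁻¹' A

theorem Admissible.mono {f : Set X → Set Y} (hf : Admissible f) {A B : Set X}
    (hA : IsClosed A) (hB : IsClosed B) (hAB : A ⊆ B) : f A ⊆ f B := by
  have h := hf.2.2 A B hA hB
  rw [union_eq_right.mpr hAB] at h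
  rw [h]; exact subset_union_left

/-- The sum space `X +_f Y`. -/
def sumTopology (f : Set X → Set Y) (hf : Admissible f) : TopologicalSpace (X ⊕ Y) where
  IsOpen s := SumClosed f sᶜ
  isOpen_univ := by
    refine ⟨?_, ?_, ?_⟩ <;> simp [hf.2.1]
  isOpen_inter := by
    rintro s t ⟨hs1, hs2, hs3⟩ ⟨ht1, ht2, ht3⟩
    refine ⟨?_, ?_, ?_⟩
    · simpa [compl_inter, preimage_union] using hs1.union ht1
    · simpa [compl_inter, preimage_union] using hs2.union ht2
    · rw [compl_inter, preimage_union, preimage_union, hf.2.2 _ _ hs1 ht1]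
      exact union_subset_union hs3 ht3
  isOpen_sUnion := by
    intro S hS
    have hc : (⋃₀ S)ᶜ = ⋂ s ∈ S, sᶜ := by
      rw [compl_sUnion, sInter_image]
    have h1 : IsClosed (Sum.inl ⁻¹' (⋃₀ S)ᶜ) := by
      rw [hc, preimage_iInter₂]
      exact isClosed_biInter fun s hs => (hS s hs).1
    have h2 : IsClosed (Sum.inr ⁻¹' (⋃₀ S)ᶜ) := by
      rw [hc, preimage_iInter₂]
      exact isClosed_biInter fun s hs => (hS s hs).2.1
    refine ⟨h1, h2, ?_⟩
    rw [hc, preimage_iInter₂, preimage_iInter₂]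
    refine subset_iInter₂ fun s hs => ?_
    have h1' : IsClosed (⋂ i ∈ S, Sum.inl ⁻¹' iᶜ) := by
      exact isClosed_biInter fun i hi => (hS i hi).1
    calc f (⋂ i ∈ S, Sum.inl ⁻¹' iᶜ) ⊆ f (Sum.inl ⁻¹' sᶜ) :=
          hf.mono h1' (hS s hs).1 (iInter₂_subset s hs)
      _ ⊆ Sum.inr ⁻¹' sᶜ := (hS s hs).2.2

theorem isClosed_sumTopology {f : Set X → Set Y} (hf : Admissible f) (A : Set (X ⊕ Y)) :
    IsClosed[sumTopology f hf] A ↔ SumClosed f A := by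
  rw [← @isOpen_compl_iff _ _ (sumTopology f hf)]
  show SumClosed f Aᶜᶜ ↔ _
  rw [compl_compl]

/-- the pullback `f*` is admissible and `π + ϖ : Y +_{f*} Z → X +_f W`
is continuous. -/
theorem statement11 {Z W : Type*} [TopologicalSpace Z] [TopologicalSpace W]
    (f : Set X → Set W) (hf : Admissible f)
    (π : Y → X) (ϖ : Z → W) (hπ : Continuous π) (hϖ : Continuous ϖ) :
    Admissible (fun A : Set Y => ϖ ⁻¹' (f (closure (π '' A)))) ∧
      ∀ hstar : Admissible (fun A : Set Y => ϖ ⁻¹' (f (closure (π '' A)))),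
        Continuous[sumTopology (fun A : Set Y => ϖ ⁻¹' (f (closure (π '' A)))) hstar,
          sumTopology f hf] (Sum.map π ϖ) := by
  constructor
  · refine ⟨fun A _ => (hf.1 _ isClosed_closure).preimage hϖ, ?_, ?_⟩
    · simp [hf.2.1]
    · intro A B _ _
      simp only [image_union, closure_union]
      rw [hf.2.2 _ _ isClosed_closure isClosed_closure, preimage_union]
  · intro hstar
    rw [continuous_def]
    rintro s ⟨h1, h2, h3⟩
    refine ⟨?_, ?_, ?_⟩
    · have : Sum.inl ⁻¹' ((Sum.map π ϖ) ⁻¹' s)ᶜ = π ⁻¹' (Sum.inl ⁻¹' sᶜ) := rfl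
      rw [this]; exact h1.preimage hπ
    · have : Sum.inr ⁻¹' ((Sum.map π ϖ) ⁻¹' s)ᶜ = ϖ ⁻¹' (Sum.inr ⁻¹' sᶜ) := rfl
      rw [this]; exact h2.preimage hϖ
    · have e1 : Sum.inl ⁻¹' ((Sum.map π ϖ) ⁻¹' s)ᶜ = π ⁻¹' (Sum.inl ⁻¹' sᶜ) := rfl
      have e2 : Sum.inr ⁻¹' ((Sum.map π ϖ) ⁻¹' s)ᶜ = ϖ ⁻¹' (Sum.inr ⁻¹' sᶜ) := rfl
      rw [e1, e2]
      intro z hz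
      simp only [mem_preimage] at hz ⊢
      have hsub : closure (π '' (π ⁻¹' (Sum.inl ⁻¹' sᶜ))) ⊆ Sum.inl ⁻¹' sᶜ :=
        closure_minimal (image_preimage_subset _ _) h1
      exact h3 (hf.mono isClosed_closure h1 hsub hz)
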